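/- arXiv:1006.2780 — 4 statements merged into one kernel-verified Lean document; each statement's English description precedes it below -/
import Mathlib

section
/- With the setup of the previous statement, if additionally h(x) = 1 for almost every x ∈ (-2, 2), then ξ(t) = 1 for almost every t ∈ (-R, -2) and ξ(t) = 0 for almost every t ∈ (2, R). -/
open MeasureTheory Real

/-- With the setup of Statement 0, if `h(x) = 1` for a.e. `x ∈ (-2,2)`,
then `ξ = 1` a.e. on `(-R,-2)` and `ξ = 0` a.e. on `(2,R)`. -/
theorem stmt_1 (R : ℝ) (hR : 2 < R) (ξ : ℝ → ℝ) (hmeas : Measurable ξ)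
    (hξ0 : ∀ t, 0 ≤ ξ t) (hξ1 : ∀ t, ξ t ≤ 1)
    (h : ℝ → ℝ)
    (hh : ∀ x, h x = Real.exp ((∫ t in (-R)..(-2), (ξ t - 1) / (t - x)) +
      ∫ t in (2:ℝ)..R, ξ t / (t - x)))
    (heq : ∀ᵐ x ∂(volume.restrict (Set.Ioo (-2:ℝ) 2)), h x = 1) :
    (∀ᵐ t ∂(volume.restrict (Set.Ioo (-R) (-2))), ξ t = 1) ∧
    (∀ᵐ t ∂(volume.restrict (Set.Ioo (2:ℝ) R)), ξ t = 0) := by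
  -- pick a point x ∈ (-2,2) with h x = 1
  have hne : volume.restrict (Set.Ioo (-2:ℝ) 2) ≠ 0 := by
    intro h0
    have := Measure.restrict_eq_zero.mp h0
    rw [Real.volume_Ioo] at this
    norm_num at this
  have : (ae (volume.restrict (Set.Ioo (-2:ℝ) 2))).NeBot := ae_neBot.mpr hne
  obtain ⟨x, hx1, hxl, hxr⟩ := (heq.and (ae_restrict_mem measurableSet_Ioo)).exists
  -- exponent vanishes at x
  have hsum : (∫ t in (-R)..(-2), (ξ t - 1) / (t - x)) +
      ∫ t in (2:ℝ)..R, ξ t / (t - x) = 0 := by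
    have := hh x
    rw [hx1] at this
    exact (Real.exp_eq_one_iff _).mp this.symm
  have hle1 : (-R) ≤ (-2:ℝ) := by linarith
  have hle2 : (2:ℝ) ≤ R := le_of_lt hR
  rw [intervalIntegral.integral_of_le hle1, intervalIntegral.integral_of_le hle2] at hsum
  set f : ℝ → ℝ := fun t => (ξ t - 1) / (t - x) with hf
  set g : ℝ → ℝ := fun t => ξ t / (t - x) with hg
  have hfnn : ∀ t ∈ Set.Ioc (-R) (-2:ℝ), 0 ≤ f t := by
    intro t ht
    have h1 : ξ t - 1 ≤ 0 := by linarith [hξ1 t]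
    have h2 : t - x ≤ 0 := by have := ht.2; linarith
    have : (ξ t - 1) / (t - x) = (1 - ξ t) / (x - t) := by
      rw [← neg_div_neg_eq]; ring_nf
    rw [hf]; simp only
    rw [this]
    exact div_nonneg (by linarith) (by linarith)
  have hgnn : ∀ t ∈ Set.Ioc (2:ℝ) R, 0 ≤ g t := by
    intro t ht
    have h2 : (0:ℝ) ≤ t - x := by have := ht.1; linarith
    exact div_nonneg (hξ0 t) h2
  have hfm : Measurable f := (hmeas.sub measurable_const).div
    ((measurable_id.sub measurable_const))
  have hgm : Measurable g := hmeas.div ((measurable_id.sub measurable_const))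
  have hfint : IntegrableOn f (Set.Ioc (-R) (-2:ℝ)) volume := by
    refine ⟨hfm.aestronglyMeasurable, ?_⟩
    refine HasFiniteIntegral.restrict_of_bounded (C := (x+2)⁻¹) measure_Ioc_lt_top ?_
    filter_upwards [ae_restrict_mem measurableSet_Ioc] with t ht
    have hden : x + 2 ≤ |t - x| := by
      rw [abs_sub_comm, abs_of_nonneg (by linarith [ht.2] : (0:ℝ) ≤ x - t)]
      linarith [ht.2]
    have hnum : |ξ t - 1| ≤ 1 := by
      rw [abs_le]; constructor <;> [linarith [hξ0 t]; linarith [hξ1 t]]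
    have hx2 : (0:ℝ) < x + 2 := by linarith
    calc ‖f t‖ = |ξ t - 1| / |t - x| := by rw [hf]; simp [abs_div]
      _ ≤ 1 / (x + 2) := div_le_div₀ (by norm_num) hnum hx2 hden
      _ = (x + 2)⁻¹ := one_div _
  have hgint : IntegrableOn g (Set.Ioc (2:ℝ) R) volume := by
    refine ⟨hgm.aestronglyMeasurable, ?_⟩
    refine HasFiniteIntegral.restrict_of_bounded (C := (2-x)⁻¹) measure_Ioc_lt_top ?_
    filter_upwards [ae_restrict_mem measurableSet_Ioc] with t ht
    have hden : 2 - x ≤ |t - x| := by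
      rw [abs_of_nonneg (by linarith [ht.1] : (0:ℝ) ≤ t - x)]
      linarith [ht.1]
    have hnum : |ξ t| ≤ 1 := by
      rw [abs_le]; constructor <;> [linarith [hξ0 t]; linarith [hξ1 t]]
    have hx2 : (0:ℝ) < 2 - x := by linarith
    calc ‖g t‖ = |ξ t| / |t - x| := by rw [hg]; simp [abs_div]
      _ ≤ 1 / (2 - x) := div_le_div₀ (by norm_num) hnum hx2 hden
      _ = (2 - x)⁻¹ := one_div _
  have hA : 0 ≤ ∫ t in Set.Ioc (-R) (-2:ℝ), f t := setIntegral_nonneg measurableSet_Ioc hfnn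
  have hB : 0 ≤ ∫ t in Set.Ioc (2:ℝ) R, g t := setIntegral_nonneg measurableSet_Ioc hgnn
  have hA0 : ∫ t in Set.Ioc (-R) (-2:ℝ), f t = 0 := by linarith
  have hB0 : ∫ t in Set.Ioc (2:ℝ) R, g t = 0 := by linarith
  have hfnn' : 0 ≤ᵐ[volume.restrict (Set.Ioc (-R) (-2:ℝ))] f := by
    filter_upwards [ae_restrict_mem measurableSet_Ioc] with t ht using hfnn t ht
  have hgnn' : 0 ≤ᵐ[volume.restrict (Set.Ioc (2:ℝ) R)] g := by
    filter_upwards [ae_restrict_mem measurableSet_Ioc] with t ht using hgnn t ht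
  have hfz : f =ᵐ[volume.restrict (Set.Ioc (-R) (-2:ℝ))] 0 :=
    (setIntegral_eq_zero_iff_of_nonneg_ae hfnn' hfint).mp hA0
  have hgz : g =ᵐ[volume.restrict (Set.Ioc (2:ℝ) R)] 0 :=
    (setIntegral_eq_zero_iff_of_nonneg_ae hgnn' hgint).mp hB0
  have hfz' : f =ᵐ[volume.restrict (Set.Ioo (-R) (-2:ℝ))] 0 :=
    ae_restrict_of_ae_restrict_of_subset Set.Ioo_subset_Ioc_self hfz
  have hgz' : g =ᵐ[volume.restrict (Set.Ioo (2:ℝ) R)] 0 :=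
    ae_restrict_of_ae_restrict_of_subset Set.Ioo_subset_Ioc_self hgz
  constructor
  · filter_upwards [hfz', ae_restrict_mem measurableSet_Ioo] with t ht hmem
    have hne : t - x ≠ 0 := by
      intro hc; nlinarith [hmem.2]
    have : (ξ t - 1) / (t - x) = 0 := ht
    rcases div_eq_zero_iff.mp this with h1 | h2
    · linarith
    · exact absurd h2 hne
  · filter_upwards [hgz', ae_restrict_mem measurableSet_Ioo] with t ht hmem
    have hne : t - x ≠ 0 := by
      intro hc; nlinarith [hmem.1]
    have : ξ t / (t - x) = 0 := ht
    rcases div_eq_zero_iff.mp this with h1 | h2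
    · exact h1
    · exact absurd h2 hne
end

section
/- Let ξ : [-R, R] → [0, 1] be measurable with ξ = 1/2 a.e. on (-2, 2), and define H(z) = (z + R) exp(∫_{-R}^{R} ξ(t)/(t - z) dt) for z in the upper half plane. Then for almost every x ∈ (-2, 2), the boundary value H(x) = lim_{y→0+} H(x + iy) exists and satisfies Re H(x) = 0 and Im H(x) = |H(x)| > 0. -/
open MeasureTheory Complex Filter Real

open scoped Topology

lemma aux_intble (ξ : ℝ → ℝ) (hmeas : Measurable ξ) (hξ0 : ∀ t, 0 ≤ ξ t) (hξ1 : ∀ t, ξ t ≤ 1)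
    (w : ℂ) (hw : w.im ≠ 0) (a b : ℝ) :
    IntervalIntegrable (fun t : ℝ => (ξ t : ℂ) / ((t : ℂ) - w)) volume a b := by
  rw [intervalIntegrable_iff]
  have hm : AEStronglyMeasurable (fun t : ℝ => (ξ t : ℂ) / ((t : ℂ) - w))
      (volume.restrict (Set.uIoc a b)) :=
    ((Complex.measurable_ofReal.comp hmeas).div
      (Complex.measurable_ofReal.sub measurable_const)).aestronglyMeasurable
  refine Integrable.mono' (g := fun _ => |w.im|⁻¹)
    ((integrableOn_const_iff).mpr (Or.inr measure_Ioc_lt_top)) hm (ae_of_all _ ?_)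
  intro t
  have h0 : 0 < |w.im| := abs_pos.mpr hw
  have h1 : |w.im| ≤ ‖(t:ℂ) - w‖ := by
    have := Complex.abs_im_le_norm ((t:ℂ) - w)
    simpa using this
  have h2 : |ξ t| ≤ 1 := abs_le.mpr ⟨by linarith [hξ0 t], hξ1 t⟩
  calc ‖(ξ t : ℂ) / ((t : ℂ) - w)‖ = |ξ t| / ‖(t:ℂ) - w‖ := by
        simp [norm_div, Complex.norm_real, Real.norm_eq_abs]
    _ ≤ 1 / |w.im| := div_le_div₀ zero_le_one h2 h0 h1
    _ = |w.im|⁻¹ := one_div _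

lemma aux_tail (ξ : ℝ → ℝ) (hmeas : Measurable ξ) (hξ0 : ∀ t, 0 ≤ ξ t) (hξ1 : ∀ t, ξ t ≤ 1)
    (x a b : ℝ) (hab : a ≤ b) (c : ℝ) (hc : 0 < c)
    (hdist : ∀ t ∈ Set.Ioc a b, c ≤ |t - x|) :
    Tendsto (fun y : ℝ => ∫ t in a..b, (ξ t : ℂ) / ((t:ℂ) - ((x:ℂ) + y * I)))
      (nhdsWithin 0 (Set.Ioi 0))
      (𝓝 (∫ t in a..b, (ξ t : ℂ) / ((t:ℂ) - (x:ℂ)))) := by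
  apply intervalIntegral.tendsto_integral_filter_of_dominated_convergence (bound := fun _ => c⁻¹)
  · refine Eventually.of_forall fun y => ?_
    exact ((Complex.measurable_ofReal.comp hmeas).div
      (Complex.measurable_ofReal.sub measurable_const)).aestronglyMeasurable
  · refine Eventually.of_forall fun y => ae_of_all _ fun t ht => ?_
    rw [Set.uIoc_of_le hab] at ht
    have h1 : c ≤ ‖(t:ℂ) - ((x:ℂ) + y * I)‖ := by
      refine le_trans (hdist t ht) ?_
      have := Complex.abs_re_le_norm ((t:ℂ) - ((x:ℂ) + y * I))
      simpa using this
    have h2 : |ξ t| ≤ 1 := abs_le.mpr ⟨by linarith [hξ0 t], hξ1 t⟩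
    calc ‖(ξ t : ℂ) / ((t:ℂ) - ((x:ℂ) + y * I))‖
        = |ξ t| / ‖(t:ℂ) - ((x:ℂ) + y * I)‖ := by
          simp [norm_div, Complex.norm_real, Real.norm_eq_abs]
      _ ≤ 1 / c := div_le_div₀ zero_le_one h2 hc h1
      _ = c⁻¹ := one_div _
  · exact intervalIntegrable_const
  · refine ae_of_all _ fun t ht => ?_
    rw [Set.uIoc_of_le hab] at ht
    have htx : ((t:ℂ) - (x:ℂ)) ≠ 0 := by
      intro h
      have h' : (t:ℝ) = x := by exact_mod_cast sub_eq_zero.mp h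
      have := hdist t ht
      rw [h', sub_self, abs_zero] at this
      linarith
    have hden : Tendsto (fun y : ℝ => (t:ℂ) - ((x:ℂ) + y * I)) (nhdsWithin 0 (Set.Ioi 0))
        (𝓝 ((t:ℂ) - (x:ℂ))) := by
      have : Tendsto (fun y : ℝ => (t:ℂ) - ((x:ℂ) + y * I)) (𝓝 0)
          (𝓝 ((t:ℂ) - ((x:ℂ) + (0:ℝ) * I))) := by
        exact tendsto_const_nhds.sub (tendsto_const_nhds.add
          ((Complex.continuous_ofReal.tendsto 0).mul tendsto_const_nhds))
      simpa using this.mono_left nhdsWithin_le_nhds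
    exact tendsto_const_nhds.div hden htx

/-- For `ξ : [-R,R] → [0,1]` measurable with `ξ = 1/2` a.e. on `(-2,2)` and
`H(z) = (z+R)exp(∫_{-R}^R ξ(t)/(t-z) dt)` on the upper half plane, for a.e. `x ∈ (-2,2)`
the boundary value `H(x) = lim_{y→0+} H(x+iy)` exists, is purely imaginary, and has
positive imaginary part (so `Im H(x) = |H(x)| > 0`). -/
theorem stmt_6 (R : ℝ) (hR : 2 < R) (ξ : ℝ → ℝ) (hmeas : Measurable ξ)
    (hξ0 : ∀ t, 0 ≤ ξ t) (hξ1 : ∀ t, ξ t ≤ 1)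
    (hhalf : ∀ᵐ t ∂(volume.restrict (Set.Ioo (-2:ℝ) 2)), ξ t = 1/2)
    (H : ℂ → ℂ)
    (hH : ∀ z : ℂ, 0 < z.im →
      H z = (z + (R : ℂ)) * Complex.exp (∫ t in (-R)..R, ((ξ t : ℂ)) / ((t : ℂ) - z))) :
    ∀ᵐ x : ℝ ∂(volume.restrict (Set.Ioo (-2:ℝ) 2)), ∃ L : ℂ,
      Tendsto (fun y : ℝ => H ((x : ℂ) + (y : ℂ) * Complex.I)) (nhdsWithin 0 (Set.Ioi 0)) (nhds L) ∧
      L.re = 0 ∧ L.im = ‖L‖ ∧ 0 < L.im := by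
  apply ae_restrict_of_forall_mem measurableSet_Ioo
  intro x hx
  have hx1 : (-2:ℝ) < x := hx.1
  have hx2 : x < 2 := hx.2
  have hz : Tendsto (fun y : ℝ => (x:ℂ) + y * I) (nhdsWithin 0 (Set.Ioi 0)) (𝓝 (x:ℂ)) := by
    have : Tendsto (fun y : ℝ => (x:ℂ) + y * I) (𝓝 0) (𝓝 ((x:ℂ) + (0:ℝ) * I)) :=
      tendsto_const_nhds.add ((Complex.continuous_ofReal.tendsto 0).mul tendsto_const_nhds)
    simpa using this.mono_left nhdsWithin_le_nhds
  -- tail limits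
  have hT1 := aux_tail ξ hmeas hξ0 hξ1 x (-R) (-2) (by linarith) (x+2) (by linarith)
    (fun t ht => by rw [_root_.abs_of_nonpos (by linarith [ht.2])]; linarith [ht.2])
  have hT3 := aux_tail ξ hmeas hξ0 hξ1 x 2 R (by linarith) (2-x) (by linarith)
    (fun t ht => by rw [_root_.abs_of_nonneg (by linarith [ht.1])]; linarith [ht.1])
  -- log limits
  have hlog2 : Tendsto (fun y : ℝ => Complex.log ((2:ℂ) - ((x:ℂ) + y * I)))
      (nhdsWithin 0 (Set.Ioi 0)) (𝓝 ((Real.log (2 - x) : ℝ) : ℂ)) := by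
    have h1 : Tendsto (fun y : ℝ => (2:ℂ) - ((x:ℂ) + y * I)) (nhdsWithin 0 (Set.Ioi 0))
        (𝓝 ((2:ℂ) - (x:ℂ))) := tendsto_const_nhds.sub hz
    have h2 : ContinuousAt Complex.log ((2:ℂ) - (x:ℂ)) := by
      apply continuousAt_clog
      rw [Complex.mem_slitPlane_iff]
      left
      simp only [Complex.sub_re, Complex.ofReal_re, Complex.re_ofNat]
      linarith
    have h3 := h2.tendsto.comp h1
    have h4 : Complex.log ((2:ℂ) - (x:ℂ)) = ((Real.log (2 - x) : ℝ) : ℂ) := by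
      rw [show ((2:ℂ) - (x:ℂ)) = (((2 - x : ℝ)) : ℂ) by push_cast; ring,
        Complex.ofReal_log (by linarith)]
    rw [← h4]
    exact h3
  have hlogm : Tendsto (fun y : ℝ => Complex.log ((-2:ℂ) - ((x:ℂ) + y * I)))
      (nhdsWithin 0 (Set.Ioi 0)) (𝓝 (((Real.log (x + 2) : ℝ) : ℂ) - (π : ℝ) * I)) := by
    have key := Complex.tendsto_log_nhdsWithin_im_neg_of_re_neg_of_im_zero
      (z := (-2:ℂ) - (x:ℂ)) (by simp; linarith) (by simp)
    have habs : ‖(-2:ℂ) - (x:ℂ)‖ = x + 2 := by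
      rw [show ((-2:ℂ) - (x:ℂ)) = (((-2 - x : ℝ)) : ℂ) by push_cast; ring,
        Complex.norm_real, Real.norm_eq_abs, abs_of_neg (by linarith)]
      ring
    rw [habs] at key
    have h1 : Tendsto (fun y : ℝ => (-2:ℂ) - ((x:ℂ) + y * I)) (nhdsWithin 0 (Set.Ioi 0))
        (nhdsWithin ((-2:ℂ) - (x:ℂ)) {z : ℂ | z.im < 0}) := by
      apply tendsto_nhdsWithin_of_tendsto_nhds_of_eventually_within
      · exact tendsto_const_nhds.sub hz
      · filter_upwards [self_mem_nhdsWithin] with y hy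
        have hy0 : (0:ℝ) < y := hy
        simp [Set.mem_setOf_eq]
        linarith
    have := key.comp h1
    simpa [Function.comp_def] using this
  -- the limit exponent and value
  set A : ℂ := ∫ t in (-R)..(-2:ℝ), (ξ t : ℂ) / ((t:ℂ) - (x:ℂ)) with hA
  set B : ℂ := ∫ t in (2:ℝ)..R, (ξ t : ℂ) / ((t:ℂ) - (x:ℂ)) with hB
  set S : ℂ := A + (1/2 : ℂ) * (((Real.log (2 - x) : ℝ) : ℂ) -
      (((Real.log (x + 2) : ℝ) : ℂ) - (π : ℝ) * I)) + B with hS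
  have hE : Tendsto (fun y : ℝ =>
      (∫ t in (-R)..(-2:ℝ), (ξ t : ℂ) / ((t:ℂ) - ((x:ℂ) + y * I)))
      + (1/2 : ℂ) * (Complex.log ((2:ℂ) - ((x:ℂ) + y * I))
          - Complex.log ((-2:ℂ) - ((x:ℂ) + y * I)))
      + (∫ t in (2:ℝ)..R, (ξ t : ℂ) / ((t:ℂ) - ((x:ℂ) + y * I))))
      (nhdsWithin 0 (Set.Ioi 0)) (𝓝 S) :=
    (hT1.add ((hlog2.sub hlogm).const_mul (1/2 : ℂ))).add hT3
  have hfull : Tendsto (fun y : ℝ => ((x:ℂ) + y * I + (R:ℂ)) * Complex.exp (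
      (∫ t in (-R)..(-2:ℝ), (ξ t : ℂ) / ((t:ℂ) - ((x:ℂ) + y * I)))
      + (1/2 : ℂ) * (Complex.log ((2:ℂ) - ((x:ℂ) + y * I))
          - Complex.log ((-2:ℂ) - ((x:ℂ) + y * I)))
      + (∫ t in (2:ℝ)..R, (ξ t : ℂ) / ((t:ℂ) - ((x:ℂ) + y * I)))))
      (nhdsWithin 0 (Set.Ioi 0)) (𝓝 (((x:ℂ) + (R:ℂ)) * Complex.exp S)) :=
    (hz.add tendsto_const_nhds).mul hE.cexp
  -- S is real + (π/2) I
  obtain ⟨a, ha⟩ : ∃ a : ℝ, A = (a : ℂ) := by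
    refine ⟨∫ t in (-R)..(-2:ℝ), ξ t / (t - x), ?_⟩
    rw [hA, ← intervalIntegral.integral_ofReal]
    apply intervalIntegral.integral_congr
    intro t _
    push_cast
    ring
  obtain ⟨b, hb⟩ : ∃ b : ℝ, B = (b : ℂ) := by
    refine ⟨∫ t in (2:ℝ)..R, ξ t / (t - x), ?_⟩
    rw [hB, ← intervalIntegral.integral_ofReal]
    apply intervalIntegral.integral_congr
    intro t _
    push_cast
    ring
  set r : ℝ := a + b + (Real.log (2 - x) - Real.log (x + 2)) / 2 with hr
  have hSform : S = ((r : ℝ) : ℂ) + (((π/2 : ℝ)) : ℂ) * I := by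
    rw [hS, ha, hb, hr]
    push_cast
    ring
  have hSre : S.re = r := by rw [hSform]; simp
  have hSim : S.im = π/2 := by rw [hSform]; simp
  have hexp_re : (Complex.exp S).re = 0 := by
    rw [Complex.exp_re, hSim, Real.cos_pi_div_two, mul_zero]
  have hexp_im : (Complex.exp S).im = Real.exp r := by
    rw [Complex.exp_im, hSim, Real.sin_pi_div_two, hSre, mul_one]
  have hxR : (0:ℝ) < x + R := by linarith
  have hLim : (((x:ℂ) + (R:ℂ)) * Complex.exp S).im = (x + R) * Real.exp r := by
    simp [Complex.mul_im, hexp_re, hexp_im]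
  refine ⟨((x:ℂ) + (R:ℂ)) * Complex.exp S, ?_, ?_, ?_, ?_⟩
  · -- tendsto
    apply hfull.congr'
    filter_upwards [self_mem_nhdsWithin] with y hy
    have hy0 : (0:ℝ) < y := hy
    have him0 : (0:ℝ) < ((x:ℂ) + (y:ℂ) * I).im := by simpa using hy0
    rw [hH _ him0]
    have hwim : ((x:ℂ) + (y:ℂ) * I).im ≠ 0 := ne_of_gt him0
    have hint : ∀ a b : ℝ, IntervalIntegrable
        (fun t : ℝ => (ξ t : ℂ) / ((t:ℂ) - ((x:ℂ) + y * I))) volume a b :=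
      fun a b => aux_intble ξ hmeas hξ0 hξ1 _ hwim a b
    have hne : ∀ t : ℝ, ((t:ℂ) - ((x:ℂ) + y * I)) ≠ 0 := by
      intro t h
      have := congrArg Complex.im h
      simp at this
      linarith
    have e2 : (∫ t in (-2:ℝ)..2, (ξ t : ℂ) / ((t:ℂ) - ((x:ℂ) + y * I)))
        = ∫ t in (-2:ℝ)..2, ((1:ℂ)/2) / ((t:ℂ) - ((x:ℂ) + y * I)) := by
      rw [intervalIntegral.integral_of_le (by norm_num : (-2:ℝ) ≤ 2),
        intervalIntegral.integral_of_le (by norm_num : (-2:ℝ) ≤ 2),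
        integral_Ioc_eq_integral_Ioo, integral_Ioc_eq_integral_Ioo]
      apply setIntegral_congr_ae measurableSet_Ioo
      filter_upwards [(ae_restrict_iff' measurableSet_Ioo).mp hhalf] with t ht htm
      rw [ht htm]
      norm_num
    have e3 : (∫ t in (-2:ℝ)..2, ((1:ℂ)/2) / ((t:ℂ) - ((x:ℂ) + y * I)))
        = (1/2 : ℂ) * (Complex.log ((2:ℂ) - ((x:ℂ) + y * I))
            - Complex.log ((-2:ℂ) - ((x:ℂ) + y * I))) := by
      have hderiv : ∀ t ∈ Set.uIcc (-2:ℝ) 2, HasDerivAt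
          (fun s : ℝ => (1/2 : ℂ) * Complex.log ((s:ℂ) - ((x:ℂ) + y * I)))
          (((1:ℂ)/2) / ((t:ℂ) - ((x:ℂ) + y * I))) t := by
        intro t _
        have hmem : (t:ℂ) - ((x:ℂ) + y * I) ∈ Complex.slitPlane := by
          rw [Complex.mem_slitPlane_iff]
          right
          simp
          linarith
        have h1 : HasDerivAt (fun u : ℂ => Complex.log (u - ((x:ℂ) + y * I)))
            (((t:ℂ) - ((x:ℂ) + y * I))⁻¹) (t:ℂ) := by
          have := (Complex.hasDerivAt_log hmem).comp (t:ℂ)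
            ((hasDerivAt_id ((t:ℂ))).sub_const ((x:ℂ) + y * I))
          simpa [Function.comp_def] using this
        have h2 := (h1.comp_ofReal).const_mul (1/2 : ℂ)
        convert h2 using 1
        · rfl
        · ring
      have hcont : IntervalIntegrable
          (fun t : ℝ => ((1:ℂ)/2) / ((t:ℂ) - ((x:ℂ) + y * I))) volume (-2) 2 := by
        apply Continuous.intervalIntegrable
        exact continuous_const.div (Complex.continuous_ofReal.sub continuous_const)
          (fun t => hne t)
      rw [intervalIntegral.integral_eq_sub_of_hasDerivAt hderiv hcont]
      push_cast
      ring
    rw [← intervalIntegral.integral_add_adjacent_intervals (hint (-R) (-2)) (hint (-2) R),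
      ← intervalIntegral.integral_add_adjacent_intervals (hint (-2) 2) (hint 2 R), e2, e3]
    congr 1
    congr 1
    ring
  · -- re = 0
    simp [Complex.mul_re, hexp_re, hexp_im]
  · -- im = abs
    have habs : ‖((x:ℂ) + (R:ℂ)) * Complex.exp S‖ = (x + R) * Real.exp r := by
      rw [norm_mul, Complex.norm_exp, hSre]
      congr 1
      rw [show ((x:ℂ) + (R:ℂ)) = (((x + R : ℝ)) : ℂ) by push_cast; ring,
        Complex.norm_real, Real.norm_eq_abs, abs_of_pos hxR]
    rw [hLim, habs]
  · rw [hLim]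
    exact mul_pos hxR (Real.exp_pos r)
end

section
/- Let c < d be reals, x < c, and let ξ : (c, d) → [0, 1] be measurable with g = ∫_c^d ξ(t) dt. Then ∫_{d-g}^{d} 1/(t - x) dt ≤ ∫_c^d ξ(t)/(t - x) dt. -/
open MeasureTheory

private lemma bdd_ii {f : ℝ → ℝ} (hf : Measurable f) {M p q : ℝ}
    (hM : ∀ t ∈ Set.uIoc p q, |f t| ≤ M) : IntervalIntegrable f volume p q := by
  rw [intervalIntegrable_iff]
  refine Integrable.mono' (g := fun _ => M) ?_ hf.aestronglyMeasurable ?_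
  · refine (integrableOn_const_iff).mpr (Or.inr ?_)
    rw [Set.uIoc, Real.volume_Ioc]
    exact ENNReal.ofReal_lt_top
  · exact (ae_restrict_iff' measurableSet_uIoc).mpr (ae_of_all _ fun t ht => by
      simpa [Real.norm_eq_abs] using hM t ht)

/-- bathtub principle, `x < c`: for measurable `ξ : (c,d) → [0,1]` with
`g = ∫_c^d ξ`, one has `∫_{d-g}^d 1/(t-x) dt ≤ ∫_c^d ξ(t)/(t-x) dt`. -/
theorem stmt_8 (c d x : ℝ) (hcd : c < d) (hx : x < c)
    (ξ : ℝ → ℝ) (hm : Measurable ξ)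
    (hξ0 : ∀ t ∈ Set.Ioo c d, 0 ≤ ξ t) (hξ1 : ∀ t ∈ Set.Ioo c d, ξ t ≤ 1)
    (g : ℝ) (hg : g = ∫ t in c..d, ξ t) :
    ∫ t in (d - g)..d, 1 / (t - x) ≤ ∫ t in c..d, ξ t / (t - x) := by
  -- truncate ξ to η with global bounds
  set η : ℝ → ℝ := fun t => min 1 (max 0 (ξ t)) with hη_def
  have hηm : Measurable η := measurable_const.min (measurable_const.max hm)
  have hη0 : ∀ t, 0 ≤ η t := fun t => le_min zero_le_one (le_max_left 0 _)
  have hη1 : ∀ t, η t ≤ 1 := fun t => min_le_left _ _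
  have hηξ : ∀ t ∈ Set.Ioo c d, η t = ξ t := by
    intro t ht
    simp [hη_def, max_eq_right (hξ0 t ht), min_eq_right (hξ1 t ht)]
  have hne : ∀ᵐ t : ℝ, t ≠ d := by
    simpa [ae_iff] using measure_singleton (d : ℝ)
  have hIeq : Set.uIoc c d = Set.Ioc c d := Set.uIoc_of_le hcd.le
  have h1 : (∫ t in c..d, ξ t) = ∫ t in c..d, η t := by
    apply intervalIntegral.integral_congr_ae
    filter_upwards [hne] with t ht hmem
    rw [hIeq] at hmem
    exact (hηξ t ⟨hmem.1, lt_of_le_of_ne hmem.2 ht⟩).symm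
  have h2 : (∫ t in c..d, ξ t / (t - x)) = ∫ t in c..d, η t / (t - x) := by
    apply intervalIntegral.integral_congr_ae
    filter_upwards [hne] with t ht hmem
    rw [hIeq] at hmem
    rw [hηξ t ⟨hmem.1, lt_of_le_of_ne hmem.2 ht⟩]
  have hgval : g = ∫ t in c..d, η t := by rw [hg, h1]
  -- integrability helpers
  have hηint : ∀ p q : ℝ, IntervalIntegrable η volume p q := fun p q =>
    bdd_ii hηm (fun t _ => abs_le.mpr ⟨by linarith [hη0 t], hη1 t⟩)
  have hdivint : ∀ p q : ℝ, c ≤ p → q ≤ d → p ≤ q →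
      IntervalIntegrable (fun t => η t / (t - x)) volume p q := by
    intro p q hp hq hpq
    apply bdd_ii (hηm.div (measurable_id.sub measurable_const)) (M := 1 / (c - x))
    intro t ht
    rw [Set.uIoc_of_le hpq] at ht
    have hcx : (0:ℝ) < c - x := by linarith
    have htx : c - x < t - x := by have := ht.1; linarith
    simp only [Pi.div_apply, Pi.sub_apply, abs_div]
    simp only [id_eq]
    rw [abs_of_nonneg (hη0 t), abs_of_pos (by linarith : (0:ℝ) < t - x)]
    calc η t / (t - x) ≤ 1 / (t - x) :=
          (div_le_div_iff_of_pos_right (by linarith : (0:ℝ) < t - x)).mpr (hη1 t)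
      _ ≤ 1 / (c - x) := one_div_le_one_div_of_le hcx htx.le
  have hTint : ∀ p q : ℝ, c ≤ p → c ≤ q →
      IntervalIntegrable (fun t => 1 / (t - x)) volume p q := by
    intro p q hp hq
    apply ContinuousOn.intervalIntegrable
    apply ContinuousOn.div continuousOn_const ((continuous_id.sub continuous_const).continuousOn)
    intro t ht
    have : min p q ≤ t := ht.1
    have : c ≤ min p q := le_min hp hq
    have : x < t := by
      simp only [Set.uIcc, Set.mem_Icc] at ht
      linarith [ht.1, le_min hp hq]
    exact sub_ne_zero.mpr (ne_of_gt this)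
  -- g bounds
  have hg0 : 0 ≤ g := by
    rw [hgval]
    exact intervalIntegral.integral_nonneg hcd.le (fun t _ => hη0 t)
  have hgle : g ≤ d - c := by
    rw [hgval]
    calc (∫ t in c..d, η t) ≤ ∫ _t in c..d, (1:ℝ) :=
          intervalIntegral.integral_mono_on hcd.le (hηint c d) intervalIntegrable_const
            (fun t _ => hη1 t)
      _ = d - c := by simp
  set a := d - g with ha
  have hca : c ≤ a := by rw [ha]; linarith
  have had : a ≤ d := by rw [ha]; linarith
  have hax : (0:ℝ) < a - x := by linarith
  have hsplitη : (∫ t in c..a, η t) + (∫ t in a..d, η t) = g := by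
    rw [hgval]
    exact intervalIntegral.integral_add_adjacent_intervals (hηint c a) (hηint a d)
  -- lower bound on [c,a]
  have key1 : (∫ t in c..a, η t * (1 / (a - x))) ≤ ∫ t in c..a, η t / (t - x) := by
    apply intervalIntegral.integral_mono_on hca ((hηint c a).mul_const _)
      (hdivint c a le_rfl had hca)
    intro t ht
    have htx : (0:ℝ) < t - x := by have := ht.1; linarith
    have h1t : 1 / (a - x) ≤ 1 / (t - x) :=
      one_div_le_one_div_of_le htx (by linarith [ht.2])
    calc η t * (1 / (a - x)) ≤ η t * (1 / (t - x)) :=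
          mul_le_mul_of_nonneg_left h1t (hη0 t)
      _ = η t / (t - x) := (div_eq_mul_one_div _ _).symm
  -- lower bound on [a,d]
  have key2 : (∫ t in a..d, (1 / (t - x) + (η t - 1) * (1 / (a - x))))
      ≤ ∫ t in a..d, η t / (t - x) := by
    apply intervalIntegral.integral_mono_on had
      ((hTint a d hca (by linarith)).add (((hηint a d).sub intervalIntegrable_const).mul_const _))
      (hdivint a d hca le_rfl had)
    intro t ht
    have htx : (0:ℝ) < t - x := by have := ht.1; linarith
    have h1t : 1 / (t - x) ≤ 1 / (a - x) :=
      one_div_le_one_div_of_le hax (by linarith [ht.1])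
    have hmul : (η t - 1) * (1 / (a - x)) ≤ (η t - 1) * (1 / (t - x)) :=
      mul_le_mul_of_nonpos_left h1t (by linarith [hη1 t])
    have hring : η t / (t - x) = 1 / (t - x) + (η t - 1) * (1 / (t - x)) := by
      field_simp
      ring
    linarith [hmul, hring.ge]
  -- compute the two lower-bound integrals
  have hv1 : (∫ t in c..a, η t * (1 / (a - x))) = (∫ t in c..a, η t) * (1 / (a - x)) :=
    intervalIntegral.integral_mul_const _ _
  have hv2 : (∫ t in a..d, (1 / (t - x) + (η t - 1) * (1 / (a - x))))
      = (∫ t in a..d, 1 / (t - x)) + ((∫ t in a..d, η t) - (d - a)) * (1 / (a - x)) := by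
    rw [intervalIntegral.integral_add (hTint a d hca (by linarith))
      (((hηint a d).sub intervalIntegrable_const).mul_const _),
      intervalIntegral.integral_mul_const,
      intervalIntegral.integral_sub (hηint a d) intervalIntegrable_const]
    simp
  have hsum : (∫ t in c..a, η t / (t - x)) + (∫ t in a..d, η t / (t - x))
      = ∫ t in c..d, η t / (t - x) :=
    intervalIntegral.integral_add_adjacent_intervals (hdivint c a le_rfl had hca)
      (hdivint a d hca le_rfl had)
  have hda : d - a = g := by rw [ha]; ring
  have heq : (∫ t in c..a, η t) * (1 / (a - x))
      + ((∫ t in a..d, 1 / (t - x)) + ((∫ t in a..d, η t) - (d - a)) * (1 / (a - x)))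
      = ∫ t in a..d, 1 / (t - x) := by
    rw [hda]
    linear_combination (1 / (a - x)) * hsplitη
  rw [h2]
  linarith [key1, key2, hv1, hv2, hsum, heq]
end

section
/- Let c < d, 0 ≤ g ≤ d - c, and x < c. If ξ : (c, d) → [0, 1] is measurable with ∫_c^d ξ = g and ∫_c^d ξ(t)/(t - x) dt = ∫_{d-g}^d 1/(t - x) dt, then ξ = χ_{(d-g, d)} almost everywhere on (c, d). -/
open MeasureTheory

/-- equality case of the bathtub principle, `x < c`: if
`∫_c^d ξ(t)/(t-x) dt = ∫_{d-g}^d 1/(t-x) dt`, then `ξ = χ_{(d-g,d)}` a.e. on `(c,d)`. -/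
theorem stmt_10 (c d x g : ℝ) (hcd : c < d) (hx : x < c)
    (hg0 : 0 ≤ g) (hg1 : g ≤ d - c)
    (ξ : ℝ → ℝ) (hm : Measurable ξ)
    (hξ0 : ∀ t ∈ Set.Ioo c d, 0 ≤ ξ t) (hξ1 : ∀ t ∈ Set.Ioo c d, ξ t ≤ 1)
    (hg : ∫ t in c..d, ξ t = g)
    (heq : ∫ t in c..d, ξ t / (t - x) = ∫ t in (d - g)..d, 1 / (t - x)) :
    ∀ᵐ t ∂(volume.restrict (Set.Ioo c d)),
      ξ t = Set.indicator (Set.Ioo (d - g) d) (fun _ => 1) t := by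
  set a := d - g with ha
  have hca : c ≤ a := by simp only [ha]; linarith
  have had : a ≤ d := by simp only [ha]; linarith
  have hax : (0:ℝ) < a - x := by linarith
  have hcx : (0:ℝ) < c - x := by linarith
  set ind : ℝ → ℝ := Set.indicator (Set.Ioo a d) (fun _ => 1) with hind
  set k : ℝ → ℝ := fun t => (t - x)⁻¹ - (a - x)⁻¹ with hk
  have hmk : Measurable k := ((measurable_id.sub measurable_const).inv).sub measurable_const
  have hmind : Measurable ind := (measurable_const.indicator measurableSet_Ioo)
  -- boundedness helper
  have hbdd : ∀ (f : ℝ → ℝ), Measurable f → ∀ C : ℝ, (∀ t ∈ Set.Ioo c d, ‖f t‖ ≤ C) →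
      IntegrableOn f (Set.Ioo c d) volume := by
    intro f hf C hC
    refine Measure.integrableOn_of_bounded (M := C) ?_ hf.aestronglyMeasurable ?_
    · rw [Real.volume_Ioo]; exact ENNReal.ofReal_ne_top
    · exact (ae_restrict_iff' measurableSet_Ioo).2 (ae_of_all _ hC)
  have hinv_bound : ∀ t ∈ Set.Ioo c d, (t - x)⁻¹ ≤ (c - x)⁻¹ := by
    intro t ht
    exact inv_anti₀ hcx (by linarith [ht.1])
  have hinv_pos : ∀ t ∈ Set.Ioo c d, 0 < (t - x)⁻¹ := by
    intro t ht; exact inv_pos.2 (by linarith [ht.1])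
  have hax_inv_le : (a - x)⁻¹ ≤ (c - x)⁻¹ := inv_anti₀ hcx (by linarith)
  have hk_bound : ∀ t ∈ Set.Ioo c d, ‖k t‖ ≤ (c - x)⁻¹ := by
    intro t ht
    rw [Real.norm_eq_abs, abs_le]
    constructor
    · have := hinv_pos t ht; simp only [hk]; linarith
    · have := hinv_bound t ht
      have : (a - x)⁻¹ > 0 := inv_pos.2 hax
      simp only [hk]; linarith [hinv_bound t ht]
  have hξ_bound : ∀ t ∈ Set.Ioo c d, ‖ξ t‖ ≤ 1 := by
    intro t ht; rw [Real.norm_eq_abs, abs_le]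
    exact ⟨by linarith [hξ0 t ht], hξ1 t ht⟩
  have hind_bound : ∀ t, ‖ind t‖ ≤ 1 := by
    intro t
    rw [Real.norm_eq_abs]
    simp only [hind]
    by_cases h : t ∈ Set.Ioo a d <;> simp [Set.indicator_of_mem, Set.indicator_of_notMem, h]
  -- integrability facts
  have int_ξ : IntegrableOn ξ (Set.Ioo c d) volume := hbdd ξ hm 1 hξ_bound
  have int_ind : IntegrableOn ind (Set.Ioo c d) volume :=
    hbdd ind hmind 1 (fun t _ => hind_bound t)
  have int_ξinv : IntegrableOn (fun t => ξ t * (t - x)⁻¹) (Set.Ioo c d) volume := by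
    refine hbdd _ (hm.mul ((measurable_id.sub measurable_const).inv)) ((c - x)⁻¹) ?_
    intro t ht
    rw [norm_mul]
    calc ‖ξ t‖ * ‖(t - x)⁻¹‖ ≤ 1 * (c - x)⁻¹ := by
          apply mul_le_mul (hξ_bound t ht) ?_ (norm_nonneg _) zero_le_one
          rw [Real.norm_eq_abs, abs_of_pos (hinv_pos t ht)]; exact hinv_bound t ht
      _ = (c - x)⁻¹ := one_mul _
  have int_ξk : IntegrableOn (fun t => ξ t * k t) (Set.Ioo c d) volume := by
    refine hbdd _ (hm.mul hmk) ((c - x)⁻¹) ?_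
    intro t ht
    rw [norm_mul]
    calc ‖ξ t‖ * ‖k t‖ ≤ 1 * (c - x)⁻¹ :=
          mul_le_mul (hξ_bound t ht) (hk_bound t ht) (norm_nonneg _) zero_le_one
      _ = (c - x)⁻¹ := one_mul _
  have int_indk : IntegrableOn (fun t => ind t * k t) (Set.Ioo c d) volume := by
    refine hbdd _ (hmind.mul hmk) ((c - x)⁻¹) ?_
    intro t ht
    rw [norm_mul]
    calc ‖ind t‖ * ‖k t‖ ≤ 1 * (c - x)⁻¹ :=
          mul_le_mul (hind_bound t) (hk_bound t ht) (norm_nonneg _) zero_le_one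
      _ = (c - x)⁻¹ := one_mul _
  have int_indinv : IntegrableOn (fun t => ind t * (t - x)⁻¹) (Set.Ioo c d) volume := by
    refine hbdd _ (hmind.mul ((measurable_id.sub measurable_const).inv)) ((c - x)⁻¹) ?_
    intro t ht
    rw [norm_mul]
    calc ‖ind t‖ * ‖(t - x)⁻¹‖ ≤ 1 * (c - x)⁻¹ := by
          apply mul_le_mul (hind_bound t) ?_ (norm_nonneg _) zero_le_one
          rw [Real.norm_eq_abs, abs_of_pos (hinv_pos t ht)]; exact hinv_bound t ht
      _ = (c - x)⁻¹ := one_mul _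
  -- the four basic integrals
  have hB : ∫ t in Set.Ioo c d, ξ t = g := by
    rw [← integral_Ioc_eq_integral_Ioo, ← intervalIntegral.integral_of_le hcd.le]; exact hg
  have hA : ∫ t in Set.Ioo c d, ξ t * (t - x)⁻¹ = ∫ t in Set.Ioo a d, (t - x)⁻¹ := by
    have h1 : ∫ t in Set.Ioo c d, ξ t * (t - x)⁻¹ = ∫ t in c..d, ξ t / (t - x) := by
      rw [intervalIntegral.integral_of_le hcd.le, integral_Ioc_eq_integral_Ioo]
      simp [div_eq_mul_inv]
    have h2 : ∫ t in Set.Ioo a d, (t - x)⁻¹ = ∫ t in a..d, 1 / (t - x) := by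
      rw [intervalIntegral.integral_of_le had, integral_Ioc_eq_integral_Ioo]
      simp [one_div]
    rw [h1, h2, heq]
  have hindmul : ∀ (f : ℝ → ℝ) t, ind t * f t = Set.indicator (Set.Ioo a d) f t := by
    intro f t
    by_cases h : t ∈ Set.Ioo a d <;>
      simp [hind, Set.indicator_of_mem, Set.indicator_of_notMem, h]
  have hrestrict : (volume.restrict (Set.Ioo c d)).restrict (Set.Ioo a d)
      = volume.restrict (Set.Ioo a d) := by
    rw [Measure.restrict_restrict measurableSet_Ioo]
    congr 1
    exact Set.inter_eq_left.2 (Set.Ioo_subset_Ioo hca le_rfl)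
  have hC : ∫ t in Set.Ioo c d, ind t * (t - x)⁻¹ = ∫ t in Set.Ioo a d, (t - x)⁻¹ := by
    simp_rw [hindmul (fun t => (t - x)⁻¹)]
    rw [integral_indicator measurableSet_Ioo, hrestrict]
  have hD : ∫ t in Set.Ioo c d, ind t = g := by
    simp only [hind]
    rw [integral_indicator measurableSet_Ioo, hrestrict]
    simp only [integral_const, Measure.restrict_apply MeasurableSet.univ, Set.univ_inter,
      Real.volume_Ioo, smul_eq_mul, mul_one]
    rw [Measure.real, Measure.restrict_apply MeasurableSet.univ, Set.univ_inter, Real.volume_Ioo,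
      ENNReal.toReal_ofReal (by linarith : (0:ℝ) ≤ d - a)]
    simp [ha]
  -- the key vanishing integral
  have key0 : ∫ t in Set.Ioo c d, (ξ t - ind t) * k t = 0 := by
    have expand : ∀ t, (ξ t - ind t) * k t
        = (ξ t * (t - x)⁻¹ - ξ t * (a - x)⁻¹) - (ind t * (t - x)⁻¹ - ind t * (a - x)⁻¹) := by
      intro t; simp only [hk]; ring
    simp_rw [expand]
    have i1 : IntegrableOn (fun t => ξ t * (t - x)⁻¹ - ξ t * (a - x)⁻¹) (Set.Ioo c d) volume :=
      int_ξinv.sub (int_ξ.mul_const _)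
    have i2 : IntegrableOn (fun t => ind t * (t - x)⁻¹ - ind t * (a - x)⁻¹) (Set.Ioo c d) volume :=
      int_indinv.sub (int_ind.mul_const _)
    rw [integral_sub i1 i2, integral_sub int_ξinv (int_ξ.mul_const _),
      integral_sub int_indinv (int_ind.mul_const _),
      MeasureTheory.integral_mul_const, MeasureTheory.integral_mul_const, hA, hB, hC, hD]
    ring
  -- pointwise nonnegativity
  have hnn : ∀ t ∈ Set.Ioo c d, 0 ≤ (ξ t - ind t) * k t := by
    intro t ht
    rcases lt_trichotomy t a with h | h | h
    · have hind0 : ind t = 0 := by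
        simp only [hind]
        exact Set.indicator_of_notMem (by simp [Set.mem_Ioo]; intro h'; linarith) _
      have hk0 : 0 ≤ k t := by
        have : (a - x)⁻¹ ≤ (t - x)⁻¹ :=
          inv_anti₀ (by linarith [ht.1]) (by linarith)
        simp only [hk]; linarith
      exact mul_nonneg (by rw [hind0]; simpa using hξ0 t ht) hk0
    · have : k t = 0 := by simp [hk, h]
      rw [this, mul_zero]
    · have hind1 : ind t = 1 := by
        simp only [hind]
        exact Set.indicator_of_mem (Set.mem_Ioo.mpr ⟨h, ht.2⟩) _
      have hk0 : k t ≤ 0 := by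
        have : (t - x)⁻¹ ≤ (a - x)⁻¹ := inv_anti₀ hax (by linarith)
        simp only [hk]; linarith
      have h1 : 0 ≤ (1 - ξ t) * (-k t) :=
        mul_nonneg (sub_nonneg.2 (hξ1 t ht)) (neg_nonneg.2 hk0)
      rw [hind1]; nlinarith [h1]
  -- conclude (ξ - ind) * k = 0 a.e.
  have int_ηk : IntegrableOn (fun t => (ξ t - ind t) * k t) (Set.Ioo c d) volume := by
    have := int_ξk.sub int_indk
    simpa [sub_mul, Pi.sub_def] using this
  have hae0 : (fun t => (ξ t - ind t) * k t) =ᵐ[volume.restrict (Set.Ioo c d)] 0 := by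
    rw [← integral_eq_zero_iff_of_nonneg_ae
      ((ae_restrict_iff' measurableSet_Ioo).2 (ae_of_all _ hnn)) int_ηk]
    exact key0
  have hne : ∀ᵐ t ∂(volume.restrict (Set.Ioo c d)), t ≠ a := by
    refine ae_restrict_of_ae ?_
    have hset : {t : ℝ | ¬ t ≠ a} = {a} := by ext t; simp
    rw [ae_iff, hset, Real.volume_singleton]
  filter_upwards [hae0, hne, ae_restrict_mem measurableSet_Ioo] with t h0 hta ht
  have hkne : k t ≠ 0 := by
    rcases hta.lt_or_gt with h | h
    · have : (a - x)⁻¹ < (t - x)⁻¹ := inv_strictAnti₀ (by linarith [ht.1]) (by linarith)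
      simp only [hk]; intro hcontra; nlinarith
    · have : (t - x)⁻¹ < (a - x)⁻¹ := inv_strictAnti₀ hax (by linarith)
      simp only [hk]; intro hcontra; nlinarith
  have : ξ t - ind t = 0 := by
    rcases mul_eq_zero.mp h0 with h | h
    · exact h
    · exact absurd h hkne
  have : ξ t = ind t := by linarith
  exact this
end
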